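/- Let Σ⁻ be PSD, C a matrix, and R_s, R_d PSD with R_s + R_d positive definite (or CΣ⁻Cᵀ + R_s + R_d invertible). Then the matrix inequality Q ⪰ M(I−KC)Σ⁻(I−KC)ᵀMᵀ + MK(R_s + R_d)KᵀMᵀ holds if and only if the 4×4 block matrix [[Q, M(I−KC)√Σ⁻, MK, MK],[√Σ⁻(I−KC)ᵀMᵀ, I, 0, 0],[KᵀMᵀ, 0, R_s^{-1}, 0],[KᵀMᵀ, 0, 0, R_d^{-1}]] is positive semidefinite, where √Σ⁻ is the PSD square root of Σ⁻. -/

import Mathlib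

open Matrix

/-- The PSD square root of a PSD matrix, as `Matrix.PosSemidef.sqrt` was defined in Mathlib
of December 2024 (it has since been removed). -/
noncomputable def Matrix.PosSemidef.sqrt {n : Type*} [Fintype n] [DecidableEq n]
    {A : Matrix n n ℝ} (hA : A.PosSemidef) : Matrix n n ℝ :=
  (hA.1.eigenvectorUnitary : Matrix n n ℝ) *
    diagonal ((↑) ∘ (Real.sqrt) ∘ hA.1.eigenvalues) *
    (star (hA.1.eigenvectorUnitary : Matrix n n ℝ))

lemma Matrix.PosSemidef.sqrt_isHermitian {n : Type*} [Fintype n] [DecidableEq n]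
    {A : Matrix n n ℝ} (hA : A.PosSemidef) : hA.sqrt.IsHermitian := by
  unfold Matrix.IsHermitian Matrix.PosSemidef.sqrt
  simp only [star_eq_conjTranspose, conjTranspose_mul, conjTranspose_conjTranspose,
    diagonal_conjTranspose, star_trivial, Matrix.mul_assoc]

lemma Matrix.PosSemidef.sqrt_mul_self {n : Type*} [Fintype n] [DecidableEq n]
    {A : Matrix n n ℝ} (hA : A.PosSemidef) : hA.sqrt * hA.sqrt = A := by
  unfold Matrix.PosSemidef.sqrt
  conv_rhs => rw [hA.1.spectral_theorem, Unitary.conjStarAlgAut_apply]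
  have hu : (star (hA.1.eigenvectorUnitary : Matrix n n ℝ)) *
      (hA.1.eigenvectorUnitary : Matrix n n ℝ) = 1 := Unitary.coe_star_mul_self _
  simp only [Matrix.mul_assoc]
  rw [← Matrix.mul_assoc (star _) _ , hu, Matrix.one_mul, ← Matrix.mul_assoc (diagonal _),
    diagonal_mul_diagonal]
  congr 2
  ext j
  rw [diagonal_apply, diagonal_apply]
  split_ifs <;> simp [Real.mul_self_sqrt (hA.eigenvalues_nonneg j)]

lemma posDef_fromBlocks_diag {m n : ℕ} {A : Matrix (Fin m) (Fin m) ℝ}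
    {D : Matrix (Fin n) (Fin n) ℝ} (hA : A.PosDef) (hD : D.PosDef) :
    (Matrix.fromBlocks A 0 0 D).PosDef := by
  rw [posDef_iff_dotProduct_mulVec]
  refine ⟨?_, fun x hx => ?_⟩
  · unfold Matrix.IsHermitian
    rw [fromBlocks_conjTranspose]
    simp only [conjTranspose_zero]
    rw [hA.1.eq, hD.1.eq]
  · rw [← Sum.elim_comp_inl_inr x, fromBlocks_mulVec]
    simp only [zero_mulVec, add_zero, zero_add, Sum.elim_comp_inl, Sum.elim_comp_inr]
    have hstar : star (Sum.elim (x ∘ Sum.inl) (x ∘ Sum.inr)) =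
        Sum.elim (star (x ∘ Sum.inl)) (star (x ∘ Sum.inr)) := by
      ext i; cases i <;> rfl
    rw [hstar, sumElim_dotProduct_sumElim]
    by_cases h1 : x ∘ Sum.inl = 0
    · have h2 : x ∘ Sum.inr ≠ 0 := by
        intro h2
        apply hx
        ext i
        cases i with
        | inl i => exact congrFun h1 i
        | inr i => exact congrFun h2 i
      have := hD.dotProduct_mulVec_pos h2
      have h0 := (posSemidef_iff_dotProduct_mulVec.mp hA.posSemidef).2 (x ∘ Sum.inl)
      linarith
    · have := hA.dotProduct_mulVec_pos h1
      have h0 := (posSemidef_iff_dotProduct_mulVec.mp hD.posSemidef).2 (x ∘ Sum.inr)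
      linarith

theorem lmi_reformulation_utility {p n m : ℕ}
    (Q : Matrix (Fin p) (Fin p) ℝ) (hQ : Q.IsHermitian)
    (M : Matrix (Fin p) (Fin n) ℝ)
    (K : Matrix (Fin n) (Fin m) ℝ)
    (C : Matrix (Fin m) (Fin n) ℝ)
    (Sig : Matrix (Fin n) (Fin n) ℝ) (hSig : Sig.PosSemidef)
    (Rs Rd : Matrix (Fin m) (Fin m) ℝ) (hRs : Rs.PosDef) (hRd : Rd.PosDef) :
    (Q - (M * (1 - K * C) * Sig * (1 - K * C)ᵀ * Mᵀ +
        M * K * (Rs + Rd) * Kᵀ * Mᵀ)).PosSemidef ↔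
    (Matrix.fromBlocks
      (Matrix.fromBlocks Q (M * (1 - K * C) * hSig.sqrt) (hSig.sqrt * (1 - K * C)ᵀ * Mᵀ) 1)
      (Matrix.fromBlocks (M * K) (M * K) 0 0)
      (Matrix.fromBlocks (Kᵀ * Mᵀ) 0 (Kᵀ * Mᵀ) 0)
      (Matrix.fromBlocks Rs⁻¹ 0 0 Rd⁻¹)).PosSemidef := by
  set B1 : Matrix (Fin p) (Fin n) ℝ := M * (1 - K * C) * hSig.sqrt with hB1
  set B2 : Matrix (Fin p ⊕ Fin n) (Fin m ⊕ Fin m) ℝ :=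
    Matrix.fromBlocks (M * K) (M * K) 0 0 with hB2
  set A2 : Matrix (Fin p ⊕ Fin n) (Fin p ⊕ Fin n) ℝ :=
    Matrix.fromBlocks Q B1 B1ᴴ 1 with hA2
  set D2 : Matrix (Fin m ⊕ Fin m) (Fin m ⊕ Fin m) ℝ :=
    Matrix.fromBlocks Rs⁻¹ 0 0 Rd⁻¹ with hD2
  have hct : ∀ {a b : ℕ} (X : Matrix (Fin a) (Fin b) ℝ), Xᴴ = Xᵀ := by
    intro a b X; ext i j; simp
  have hB1H : B1ᴴ = hSig.sqrt * (1 - K * C)ᵀ * Mᵀ := by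
    rw [hB1, conjTranspose_mul, conjTranspose_mul, hSig.sqrt_isHermitian.eq, hct, hct, Matrix.mul_assoc]
  have hB2H : B2ᴴ = Matrix.fromBlocks (Kᵀ * Mᵀ) 0 (Kᵀ * Mᵀ) 0 := by
    rw [hB2, fromBlocks_conjTranspose]
    simp only [conjTranspose_mul, conjTranspose_zero]
    rw [hct M, hct K]
  have hD2pd : D2.PosDef := posDef_fromBlocks_diag hRs.inv hRd.inv
  haveI : Invertible D2 := hD2pd.isUnit.invertible
  have hD2inv : D2⁻¹ = Matrix.fromBlocks Rs 0 0 Rd := by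
    apply Matrix.inv_eq_right_inv
    rw [hD2, fromBlocks_multiply]
    simp [Matrix.nonsing_inv_mul Rs (Matrix.isUnit_iff_isUnit_det Rs |>.mp hRs.isUnit),
      Matrix.nonsing_inv_mul Rd (Matrix.isUnit_iff_isUnit_det Rd |>.mp hRd.isUnit),
      ← fromBlocks_one]
  have key : (Matrix.fromBlocks A2 B2 B2ᴴ D2).PosSemidef ↔
      (A2 - B2 * D2⁻¹ * B2ᴴ).PosSemidef :=
    Matrix.PosDef.fromBlocks₂₂ A2 B2 hD2pd
  have hprod : B2 * D2⁻¹ * B2ᴴ =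
      Matrix.fromBlocks (M * K * (Rs + Rd) * Kᵀ * Mᵀ) 0 0 0 := by
    rw [hD2inv, hB2H, hB2, fromBlocks_multiply, fromBlocks_multiply]
    congr 1 <;> simp [Matrix.mul_add, Matrix.add_mul, Matrix.mul_assoc]
  have hsub : A2 - B2 * D2⁻¹ * B2ᴴ =
      Matrix.fromBlocks (Q - M * K * (Rs + Rd) * Kᵀ * Mᵀ) B1 B1ᴴ 1 := by
    rw [hprod, hA2]
    ext i j
    cases i <;> cases j <;> simp [Matrix.fromBlocks, Matrix.sub_apply]
  haveI : Invertible (1 : Matrix (Fin n) (Fin n) ℝ) := invertibleOne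
  have key2 : (Matrix.fromBlocks (Q - M * K * (Rs + Rd) * Kᵀ * Mᵀ) B1 B1ᴴ
      (1 : Matrix (Fin n) (Fin n) ℝ)).PosSemidef ↔
      ((Q - M * K * (Rs + Rd) * Kᵀ * Mᵀ) - B1 * (1 : Matrix (Fin n) (Fin n) ℝ)⁻¹ * B1ᴴ).PosSemidef :=
    Matrix.PosDef.fromBlocks₂₂ _ B1 Matrix.PosDef.one
  have hBB : B1 * (1 : Matrix (Fin n) (Fin n) ℝ)⁻¹ * B1ᴴ =
      M * (1 - K * C) * Sig * (1 - K * C)ᵀ * Mᵀ := by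
    rw [inv_one, Matrix.mul_one, hB1H, hB1]
    simp only [Matrix.mul_assoc]
    rw [← Matrix.mul_assoc hSig.sqrt hSig.sqrt, hSig.sqrt_mul_self]
  rw [show (Matrix.fromBlocks
      (Matrix.fromBlocks Q (M * (1 - K * C) * hSig.sqrt) (hSig.sqrt * (1 - K * C)ᵀ * Mᵀ) 1)
      (Matrix.fromBlocks (M * K) (M * K) 0 0)
      (Matrix.fromBlocks (Kᵀ * Mᵀ) 0 (Kᵀ * Mᵀ) 0)
      (Matrix.fromBlocks Rs⁻¹ 0 0 Rd⁻¹)) = Matrix.fromBlocks A2 B2 B2ᴴ D2 by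
    rw [hB2H, hA2, hB1H]]
  rw [key, hsub, key2, hBB]
  constructor <;> intro h <;> [skip; skip] <;>
    · convert h using 1
      abel
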